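/- Let η be a unary query on Σ* recognized by a morphism μ : Σ* → M to a finite monoid M, and let x, y, z ∈ Σ* with y nonempty and e = μ(y) satisfying e^{|M|} = e^{|M|+1}. Let N = 2|M| + 1, and let c be the number of positions lying in the middle ((|M|+1)-st) copy of y in the word x y^N z that satisfy η. Then for all n, m ≥ N, #η(x yⁿ z) − #η(x yᵐ z) = (n − m)·c. In particular, if no position of the middle copy of y in x y^N z satisfies η, then #η(x yⁿ z) is constant for all n ≥ N. -/

import Mathlib

def IsMonoidMorphism {A M : Type} [Monoid M] (μ : List A → M) : Prop :=
  μ [] = 1 ∧ ∀ u v : List A, μ (u ++ v) = μ u * μ v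

/-- A morphism `μ` recognizes a unary query `η` when membership of a position `i` in
`η w` depends only on the triple `(μ (w[1..i-1]), w[i], μ (w[i+1..|w|]))`. -/
def RecognizesUnary {A M : Type} (μ : List A → M)
    (η : (w : List A) → Set (Fin w.length)) : Prop :=
  ∀ (w w' : List A) (i : Fin w.length) (i' : Fin w'.length),
    μ (w.take i) = μ (w'.take i') → w.get i = w'.get i' →
    μ (w.drop (i + 1)) = μ (w'.drop (i' + 1)) →
    (i ∈ η w ↔ i' ∈ η w')

namespace Stmt8Aux

lemma pow_stab {M : Type} [Monoid M] {e : M} {K : ℕ} (he : e ^ K = e ^ (K + 1)) :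
    ∀ a, K ≤ a → e ^ a = e ^ K := by
  intro a ha
  obtain ⟨d, rfl⟩ := Nat.exists_eq_add_of_le ha
  clear ha
  induction d with
  | zero => rfl
  | succ k ih =>
    calc e ^ (K + (k + 1)) = e ^ (K + k) * e := by rw [← pow_succ]; ring_nf
    _ = e ^ K * e := by rw [ih]
    _ = e ^ K := by rw [← pow_succ, ← he]

variable {A M : Type} [Monoid M]

lemma mu_flatten (μ : List A → M) (hμ : IsMonoidMorphism μ) (y : List A) (n : ℕ) :
    μ ((List.replicate n y).flatten) = μ y ^ n := by
  induction n with
  | zero => simpa using hμ.1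
  | succ k ih => rw [List.replicate_succ, List.flatten_cons, hμ.2, ih, pow_succ']

def Wd (x y z : List A) (n : ℕ) : List A := x ++ (List.replicate n y).flatten ++ z

lemma Wd_length (x y z : List A) (n : ℕ) :
    (Wd x y z n).length = x.length + n * y.length + z.length := by
  simp [Wd, List.length_flatten, List.map_replicate, List.sum_replicate, smul_eq_mul]
  omega

noncomputable def cnt (η : (w : List A) → Set (Fin w.length)) (w : List A) (a b : ℕ) : ℕ :=
  {j : Fin w.length | j ∈ η w ∧ a ≤ (j : ℕ) ∧ (j : ℕ) < b}.ncard

lemma cnt_eq_natset (η : (w : List A) → Set (Fin w.length)) (w : List A) (a b : ℕ) :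
    cnt η w a b =
      {p : ℕ | ∃ h : p < w.length, (⟨p, h⟩ : Fin w.length) ∈ η w ∧ a ≤ p ∧ p < b}.ncard := by
  have himg := Set.ncard_image_of_injective
    {j : Fin w.length | j ∈ η w ∧ a ≤ (j : ℕ) ∧ (j : ℕ) < b} (Fin.val_injective)
  rw [cnt, ← himg]
  congr 1
  ext p
  constructor
  · rintro ⟨j, ⟨hm, ha, hb⟩, rfl⟩
    exact ⟨j.isLt, hm, ha, hb⟩
  · rintro ⟨h, hm, ha, hb⟩
    exact ⟨⟨p, h⟩, ⟨hm, ha, hb⟩, rfl⟩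

lemma cnt_total (η : (w : List A) → Set (Fin w.length)) (w : List A) :
    (η w).ncard = cnt η w 0 w.length := by
  unfold cnt
  congr 1
  ext j
  simp [j.isLt]

lemma cnt_split (η : (w : List A) → Set (Fin w.length)) (w : List A) (a t b : ℕ)
    (hat : a ≤ t) (htb : t ≤ b) :
    cnt η w a b = cnt η w a t + cnt η w t b := by
  have hdisj : Disjoint {j : Fin w.length | j ∈ η w ∧ a ≤ (j : ℕ) ∧ (j : ℕ) < t}
      {j : Fin w.length | j ∈ η w ∧ t ≤ (j : ℕ) ∧ (j : ℕ) < b} := by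
    rw [Set.disjoint_left]
    rintro j ⟨_, _, h1⟩ ⟨_, h2, _⟩
    omega
  unfold cnt
  rw [← Set.ncard_union_eq hdisj (Set.toFinite _) (Set.toFinite _)]
  congr 1
  ext j
  simp only [Set.mem_setOf_eq, Set.mem_union]
  constructor
  · rintro ⟨hm, ha, hb⟩
    rcases lt_or_ge (j : ℕ) t with h | h
    · exact Or.inl ⟨hm, ha, h⟩
    · exact Or.inr ⟨hm, h, hb⟩
  · rintro (⟨hm, ha, hb⟩ | ⟨hm, ha, hb⟩)
    · exact ⟨hm, ha, by omega⟩
    · exact ⟨hm, by omega, hb⟩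

lemma cnt_congr (η : (w : List A) → Set (Fin w.length)) (w1 w2 : List A) (a b : ℕ)
    (hb1 : b ≤ w1.length) (hb2 : b ≤ w2.length)
    (hiff : ∀ p (h1 : p < w1.length) (h2 : p < w2.length), a ≤ p → p < b →
      ((⟨p, h1⟩ : Fin w1.length) ∈ η w1 ↔ (⟨p, h2⟩ : Fin w2.length) ∈ η w2)) :
    cnt η w1 a b = cnt η w2 a b := by
  rw [cnt_eq_natset, cnt_eq_natset]
  congr 1
  ext p
  simp only [Set.mem_setOf_eq]
  constructor
  · rintro ⟨h1, hm, ha, hb⟩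
    exact ⟨by omega, (hiff p h1 (by omega) ha hb).mp hm, ha, hb⟩
  · rintro ⟨h2, hm, ha, hb⟩
    exact ⟨by omega, (hiff p (by omega) h2 ha hb).mpr hm, ha, hb⟩

lemma cnt_shift (η : (w : List A) → Set (Fin w.length)) (w1 w2 : List A) (a b L : ℕ)
    (hLa : L ≤ a) (hab : a ≤ b) (hb1 : b ≤ w1.length) (hb2 : b - L ≤ w2.length)
    (hiff : ∀ p (h1 : p < w1.length) (h2 : p - L < w2.length), a ≤ p → p < b →
      ((⟨p, h1⟩ : Fin w1.length) ∈ η w1 ↔ (⟨p - L, h2⟩ : Fin w2.length) ∈ η w2)) :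
    cnt η w1 a b = cnt η w2 (a - L) (b - L) := by
  rw [cnt_eq_natset, cnt_eq_natset]
  have hinj : Set.InjOn (fun p => p - L)
      {p : ℕ | ∃ h : p < w1.length, (⟨p, h⟩ : Fin w1.length) ∈ η w1 ∧ a ≤ p ∧ p < b} := by
    rintro p ⟨_, _, hp, _⟩ q ⟨_, _, hq, _⟩ h
    simp only at h
    omega
  rw [← Set.ncard_image_of_injOn hinj]
  congr 1
  ext q
  simp only [Set.mem_image, Set.mem_setOf_eq]
  constructor
  · rintro ⟨p, ⟨h1, hm, ha, hb⟩, rfl⟩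
    exact ⟨by omega, (hiff p h1 (by omega) ha hb).mp hm, by omega, by omega⟩
  · rintro ⟨h2, hm, ha, hb⟩
    refine ⟨q + L, ⟨by omega, ?_, by omega, by omega⟩, by omega⟩
    apply (hiff (q + L) (by omega) (by omega) (by omega) (by omega)).mpr
    simpa [Nat.add_sub_cancel] using hm

lemma low_iff (μ : List A → M) (hμ : IsMonoidMorphism μ)
    (η : (w : List A) → Set (Fin w.length)) (hη : RecognizesUnary μ η)
    (x y z : List A) {K : ℕ} (he : μ y ^ K = μ y ^ (K + 1))
    (n m : ℕ) (hn : 2 * K + 1 ≤ n) (hm : 2 * K + 1 ≤ m) (p : ℕ)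
    (hp : p < x.length + (K + 1) * y.length)
    (hpn : p < (Wd x y z n).length) (hpm : p < (Wd x y z m).length) :
    ((⟨p, hpn⟩ : Fin _) ∈ η (Wd x y z n) ↔ (⟨p, hpm⟩ : Fin _) ∈ η (Wd x y z m)) := by
  obtain ⟨P, hP⟩ : ∃ P : List A, P = x ++ (List.replicate (K + 1) y).flatten := ⟨_, rfl⟩
  have hPlen : P.length = x.length + (K + 1) * y.length := by
    rw [hP]
    simp [List.length_flatten, List.map_replicate, List.sum_replicate, smul_eq_mul]
  have hdecomp : ∀ r : ℕ, 2 * K + 1 ≤ r →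
      Wd x y z r = P ++ ((List.replicate (r - (K + 1)) y).flatten ++ z) := by
    intro r hr
    have hr' : r = (K + 1) + (r - (K + 1)) := by omega
    rw [Wd, hP]
    conv_lhs => rw [hr']
    rw [List.replicate_add, List.flatten_append]
    simp [List.append_assoc]
  have htail : ∀ r : ℕ, 2 * K + 1 ≤ r →
      μ ((List.replicate (r - (K + 1)) y).flatten ++ z) = μ y ^ K * μ z := by
    intro r hr
    rw [hμ.2, mu_flatten μ hμ, pow_stab he _ (by omega)]
  have hpP : p < P.length := by omega
  have h1 : ∀ r : ℕ, 2 * K + 1 ≤ r → (Wd x y z r).take p = P.take p := by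
    intro r hr
    rw [hdecomp r hr, List.take_append_of_le_length hpP.le]
  have h3 : ∀ r : ℕ, (hr : 2 * K + 1 ≤ r) →
      μ ((Wd x y z r).drop (p + 1)) = μ (P.drop (p + 1)) * (μ y ^ K * μ z) := by
    intro r hr
    rw [hdecomp r hr, List.drop_append_of_le_length (show p + 1 ≤ P.length by omega),
      hμ.2, htail r hr]
  apply hη
  · show μ ((Wd x y z n).take p) = μ ((Wd x y z m).take p)
    rw [h1 n hn, h1 m hm]
  · show (Wd x y z n).get ⟨p, hpn⟩ = (Wd x y z m).get ⟨p, hpm⟩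
    simp only [List.get_eq_getElem]
    have g1 : (Wd x y z n)[p]'hpn = P[p]'hpP :=
      (List.getElem_of_eq (hdecomp n hn) hpn).trans (List.getElem_append_left hpP)
    have g2 : (Wd x y z m)[p]'hpm = P[p]'hpP :=
      (List.getElem_of_eq (hdecomp m hm) hpm).trans (List.getElem_append_left hpP)
    rw [g1, g2]
  · show μ ((Wd x y z n).drop (p + 1)) = μ ((Wd x y z m).drop (p + 1))
    rw [h3 n hn, h3 m hm]

lemma high_iff (μ : List A → M) (hμ : IsMonoidMorphism μ)
    (η : (w : List A) → Set (Fin w.length)) (hη : RecognizesUnary μ η)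
    (x y z : List A) {K : ℕ} (he : μ y ^ K = μ y ^ (K + 1))
    (n : ℕ) (hn : K ≤ n) (p : ℕ)
    (hp : x.length + (K + 1) * y.length ≤ p)
    (hp1 : p < (Wd x y z (n + 1)).length) (hp0 : p - y.length < (Wd x y z n).length) :
    ((⟨p, hp1⟩ : Fin _) ∈ η (Wd x y z (n + 1)) ↔
      (⟨p - y.length, hp0⟩ : Fin _) ∈ η (Wd x y z n)) := by
  obtain ⟨P0, hP0⟩ : ∃ P0 : List A, P0 = x ++ (List.replicate K y).flatten := ⟨_, rfl⟩
  obtain ⟨U, hU⟩ : ∃ U : List A, U = P0 ++ y := ⟨_, rfl⟩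
  obtain ⟨T, hT⟩ : ∃ T : List A, T = (List.replicate (n - K) y).flatten ++ z := ⟨_, rfl⟩
  have hP0len : P0.length = x.length + K * y.length := by
    rw [hP0]
    simp [List.length_flatten, List.map_replicate, List.sum_replicate, smul_eq_mul]
  have hUlen : U.length = P0.length + y.length := by rw [hU]; simp
  have hUlen2 : U.length = x.length + (K + 1) * y.length := by rw [hUlen, hP0len]; ring
  have hdec1 : Wd x y z (n + 1) = U ++ T := by
    have hr : n + 1 = K + 1 + (n - K) := by omega
    rw [Wd, hU, hP0, hT]
    conv_lhs => rw [hr]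
    rw [List.replicate_add, List.replicate_add, List.flatten_append, List.flatten_append]
    simp [List.append_assoc]
  have hdec0 : Wd x y z n = P0 ++ T := by
    have hr : n = K + (n - K) := by omega
    rw [Wd, hP0, hT]
    conv_lhs => rw [hr]
    rw [List.replicate_add, List.flatten_append]
    simp [List.append_assoc]
  have hUP : μ U = μ P0 := by
    rw [hU, hP0, hμ.2, hμ.2, mu_flatten μ hμ, mul_assoc, ← pow_succ, ← he]
  have hpU : U.length ≤ p := by omega
  apply hη
  · show μ ((Wd x y z (n + 1)).take p) = μ ((Wd x y z n).take (p - y.length))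
    have e1 : (Wd x y z (n + 1)).take p = U ++ T.take (p - U.length) := by
      rw [hdec1]
      have h : List.take (U.length + (p - U.length)) (U ++ T) = U ++ List.take (p - U.length) T := List.take_length_add_append _
      rwa [show U.length + (p - U.length) = p from by omega] at h
    have e2 : (Wd x y z n).take (p - y.length) = P0 ++ T.take (p - U.length) := by
      rw [hdec0]
      have h : List.take (P0.length + (p - U.length)) (P0 ++ T) = P0 ++ List.take (p - U.length) T := List.take_length_add_append _
      rwa [show P0.length + (p - U.length) = p - y.length from by omega] at h
    rw [e1, e2, hμ.2, hμ.2, hUP]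
  · show (Wd x y z (n + 1)).get ⟨p, hp1⟩ = (Wd x y z n).get ⟨p - y.length, hp0⟩
    simp only [List.get_eq_getElem]
    have hpT : p - U.length < T.length := by
      have h := hp1
      rw [hdec1, List.length_append] at h
      omega
    have g1 : (Wd x y z (n + 1))[p]'hp1 = T[p - U.length]'hpT :=
      (List.getElem_of_eq hdec1 hp1).trans (List.getElem_append_right hpU)
    have g2 : (Wd x y z n)[p - y.length]'hp0 = T[p - U.length]'hpT := by
      rw [List.getElem_of_eq hdec0 hp0, List.getElem_append_right (show P0.length ≤ p - y.length by omega)]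
      simp only [show p - y.length - P0.length = p - U.length from by omega]
    rw [g1, g2]
  · show μ ((Wd x y z (n + 1)).drop (p + 1)) = μ ((Wd x y z n).drop (p - y.length + 1))
    have e1 : (Wd x y z (n + 1)).drop (p + 1) = T.drop (p + 1 - U.length) := by
      rw [hdec1]
      have h : List.drop (U.length + (p + 1 - U.length)) (U ++ T) = List.drop (p + 1 - U.length) T := by simp
      rwa [show U.length + (p + 1 - U.length) = p + 1 from by omega] at h
    have e2 : (Wd x y z n).drop (p - y.length + 1) = T.drop (p + 1 - U.length) := by
      rw [hdec0]
      have h : List.drop (P0.length + (p + 1 - U.length)) (P0 ++ T) = List.drop (p + 1 - U.length) T := by simp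
      rwa [show P0.length + (p + 1 - U.length) = p - y.length + 1 from by omega] at h
    rw [e1, e2]

end Stmt8Aux

open Stmt8Aux in
theorem stmt8 {A M : Type} [Monoid M] [Fintype M]
    (μ : List A → M) (hμ : IsMonoidMorphism μ)
    (η : (w : List A) → Set (Fin w.length)) (hη : RecognizesUnary μ η)
    (x y z : List A) (hy : y ≠ [])
    (he : μ y ^ (Fintype.card M) = μ y ^ (Fintype.card M + 1))
    (N : ℕ) (hN : N = 2 * Fintype.card M + 1)
    -- `W n` is the word `x yⁿ z`
    (W : ℕ → List A) (hW : ∀ n, W n = x ++ (List.replicate n y).flatten ++ z)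
    -- `c` is the number of positions of `x y^N z` lying in the middle
    -- (`(|M|+1)`-st) copy of `y` that satisfy `η`
    (c : ℕ)
    (hc : c = Set.ncard {j : Fin (W N).length | j ∈ η (W N) ∧
      x.length + Fintype.card M * y.length ≤ (j : ℕ) ∧
      (j : ℕ) < x.length + (Fintype.card M + 1) * y.length}) :
    (∀ n m : ℕ, N ≤ n → N ≤ m →
      ((η (W n)).ncard : ℤ) - ((η (W m)).ncard : ℤ) = ((n : ℤ) - (m : ℤ)) * c) ∧
    (c = 0 → ∀ n, N ≤ n → (η (W n)).ncard = (η (W N)).ncard) := by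
  classical
  set K : ℕ := Fintype.card M with hK
  have hWd : ∀ k, W k = Wd x y z k := hW
  have hL : 1 ≤ y.length := List.length_pos_iff.mpr hy
  rw [hWd N] at hc
  have hc' : c = cnt η (Wd x y z N) (x.length + K * y.length)
      (x.length + (K + 1) * y.length) := hc
  have hlen : ∀ r, (Wd x y z r).length = x.length + r * y.length + z.length :=
    Wd_length x y z
  have hKL : x.length + (K + 1) * y.length = (x.length + K * y.length) + y.length := by ring
  have step : ∀ n : ℕ, N ≤ n →
      (η (Wd x y z (n + 1))).ncard = (η (Wd x y z n)).ncard + c := by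
    intro n hn
    have h2K : 2 * K + 1 ≤ n := by omega
    have hlen1 : (Wd x y z (n + 1)).length = x.length + (n + 1) * y.length + z.length := hlen _
    have hlen0 : (Wd x y z n).length = x.length + n * y.length + z.length := hlen _
    have hlenN : (Wd x y z N).length = x.length + N * y.length + z.length := hlen _
    have hm0 : (K + 1) * y.length ≤ (n + 1) * y.length := mul_le_mul_left (by omega) _
    have hm1 : (K + 1) * y.length ≤ n * y.length := mul_le_mul_left (by omega) _
    have hm2 : (K + 1) * y.length ≤ N * y.length := mul_le_mul_left (by omega) _
    have hm3 : n * y.length + y.length = (n + 1) * y.length := by ring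
    have e1 : (η (Wd x y z (n + 1))).ncard
        = cnt η (Wd x y z (n + 1)) 0 (x.length + K * y.length)
          + cnt η (Wd x y z (n + 1)) (x.length + K * y.length)
              (x.length + (K + 1) * y.length)
          + cnt η (Wd x y z (n + 1)) (x.length + (K + 1) * y.length)
              (Wd x y z (n + 1)).length := by
      rw [cnt_total η (Wd x y z (n + 1)),
        cnt_split η _ 0 (x.length + (K + 1) * y.length) _ (by omega) (by omega),
        cnt_split η _ 0 (x.length + K * y.length) (x.length + (K + 1) * y.length)
          (by omega) (by omega)]
    have e0 : (η (Wd x y z n)).ncard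
        = cnt η (Wd x y z n) 0 (x.length + K * y.length)
          + cnt η (Wd x y z n) (x.length + K * y.length) (Wd x y z n).length := by
      rw [cnt_total η (Wd x y z n),
        cnt_split η _ 0 (x.length + K * y.length) _ (by omega) (by omega)]
    have q1 : cnt η (Wd x y z (n + 1)) 0 (x.length + K * y.length)
        = cnt η (Wd x y z n) 0 (x.length + K * y.length) := by
      apply cnt_congr
      · omega
      · omega
      · intro p h1 h2 hap hpb
        exact low_iff μ hμ η hη x y z he (n + 1) n (by omega) (by omega) p (by omega) h1 h2
    have q2 : cnt η (Wd x y z (n + 1)) (x.length + K * y.length)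
        (x.length + (K + 1) * y.length) = c := by
      rw [hc']
      apply cnt_congr
      · omega
      · omega
      · intro p h1 h2 hap hpb
        exact low_iff μ hμ η hη x y z he (n + 1) N (by omega) (by omega) p (by omega) h1 h2
    have q3 : cnt η (Wd x y z (n + 1)) (x.length + (K + 1) * y.length)
        (Wd x y z (n + 1)).length
        = cnt η (Wd x y z n) (x.length + K * y.length) (Wd x y z n).length := by
      have h := cnt_shift η (Wd x y z (n + 1)) (Wd x y z n)
        (x.length + (K + 1) * y.length) ((Wd x y z (n + 1)).length) y.length
        (by omega) (by omega) le_rfl (by omega)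
        (fun p h1 h2 hap hpb => high_iff μ hμ η hη x y z he n (by omega) p hap h1 h2)
      rwa [show x.length + (K + 1) * y.length - y.length = x.length + K * y.length from by omega,
        show (Wd x y z (n + 1)).length - y.length = (Wd x y z n).length from by omega] at h
    rw [e1, e0, q1, q2, q3]
    omega
  have key : ∀ d : ℕ, (η (Wd x y z (N + d))).ncard = (η (Wd x y z N)).ncard + d * c := by
    intro d
    induction d with
    | zero => simp
    | succ k ih =>
      have hs := step (N + k) (by omega)
      rw [show N + (k + 1) = (N + k) + 1 from rfl, hs, ih]
      ring
  constructor
  · intro n m hn hm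
    have h1 := key (n - N)
    have h2 := key (m - N)
    rw [show N + (n - N) = n from by omega] at h1
    rw [show N + (m - N) = m from by omega] at h2
    rw [hWd n, hWd m]
    have h1' := congrArg (Nat.cast : ℕ → ℤ) h1
    have h2' := congrArg (Nat.cast : ℕ → ℤ) h2
    push_cast [Nat.cast_sub hn] at h1'
    push_cast [Nat.cast_sub hm] at h2'
    rw [h1', h2']
    ring
  · intro hc0 n hn
    have h1 := key (n - N)
    rw [show N + (n - N) = n from by omega] at h1
    rw [hWd n, hWd N, h1, hc0]
    simp
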